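/- Let W ⊆ ℝⁿ be a nonempty compact set, a ∈ ℝⁿ, and ε ∈ (0,1). Then the supremum, over all Borel probability measures P on ℝⁿ with P(W) = 1, of CVaR_ε^P(ξ ↦ a·ξ) equals max_{ξ∈W} a·ξ, where CVaR_ε^P(L) = inf_{β∈ℝ} { β + ε⁻¹ ∫ (L(ξ) − β)⁺ dP(ξ) } and (x)⁺ = max(x,0). -/

import Mathlib

open Matrix MeasureTheory

/-- Conditional Value-at-Risk of the loss `L` at level `ε` under the probability measure `P`:
`CVaR_ε^P(L) = inf_β { β + ε⁻¹ ∫ (L ξ − β)⁺ dP }`. -/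
noncomputable def cvar {n : ℕ} (P : Measure (Fin n → ℝ)) (ε : ℝ)
    (L : (Fin n → ℝ) → ℝ) : ℝ :=
  ⨅ β : ℝ, β + ε⁻¹ * ∫ ξ, max (L ξ - β) 0 ∂P

/-- for a nonempty compact `W`, the supremum over all Borel probability measures
supported on `W` of the CVaR of the linear loss `ξ ↦ a·ξ` equals `max_{ξ ∈ W} a·ξ`. -/
theorem worst_case_cvar_eq_max {n : ℕ}
    (W : Set (Fin n → ℝ)) (hWc : IsCompact W) (hWne : W.Nonempty)
    (a : Fin n → ℝ) (ε : ℝ) (hε : ε ∈ Set.Ioo (0 : ℝ) 1) :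
    ∃ ξ₀ ∈ W, (∀ ξ ∈ W, a ⬝ᵥ ξ ≤ a ⬝ᵥ ξ₀) ∧
      sSup {v : ℝ | ∃ P : Measure (Fin n → ℝ),
          IsProbabilityMeasure P ∧ P W = 1 ∧ v = cvar P ε (fun ξ => a ⬝ᵥ ξ)}
        = a ⬝ᵥ ξ₀ := by
  obtain ⟨hε0, hε1⟩ := hε
  have hεinv1 : (1 : ℝ) ≤ ε⁻¹ := one_le_inv_iff₀.mpr ⟨hε0, le_of_lt hε1⟩
  have hεinv0 : (0 : ℝ) ≤ ε⁻¹ := by positivity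
  have hL : Continuous fun ξ : Fin n → ℝ => a ⬝ᵥ ξ := by
    unfold dotProduct
    exact continuous_finset_sum _ fun i _ => (continuous_const.mul (continuous_apply i))
  obtain ⟨ξ₀, hξ₀W, hmax⟩ := hWc.exists_isMaxOn hWne hL.continuousOn
  have hmax' : ∀ ξ ∈ W, a ⬝ᵥ ξ ≤ a ⬝ᵥ ξ₀ := fun ξ hξ => hmax hξ
  set M := a ⬝ᵥ ξ₀ with hM
  obtain ⟨C, hC⟩ := hWc.exists_bound_of_continuousOn hL.continuousOn
  have hWmeas : MeasurableSet W := hWc.isClosed.measurableSet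
  set S := {v : ℝ | ∃ P : Measure (Fin n → ℝ),
      IsProbabilityMeasure P ∧ P W = 1 ∧ v = cvar P ε (fun ξ => a ⬝ᵥ ξ)} with hS
  -- every element of S is ≤ M
  have hub : ∀ v ∈ S, v ≤ M := by
    rintro v ⟨P, hP, hPW, rfl⟩
    have haeW : ∀ᵐ ξ ∂P, ξ ∈ W := by
      have : P Wᶜ = 0 := by
        rw [measure_compl hWmeas (measure_ne_top P W), hPW, measure_univ, tsub_self]
      exact (MeasureTheory.ae_iff).mpr this
    -- bounded below: the infimum is ≤ value at β = M
    have hInt : ∀ β : ℝ, Integrable (fun ξ => max (a ⬝ᵥ ξ - β) 0) P := by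
      intro β
      refine Integrable.mono' (integrable_const (C + |β|))
        (((hL.sub continuous_const).max continuous_const).aestronglyMeasurable) ?_
      filter_upwards [haeW] with ξ hξ
      have h1 : |a ⬝ᵥ ξ| ≤ C := by simpa using hC ξ hξ
      rw [Real.norm_eq_abs]
      have h2 : |max (a ⬝ᵥ ξ - β) 0| ≤ |a ⬝ᵥ ξ - β| := by
        rcases le_total (a ⬝ᵥ ξ - β) 0 with h | h
        · rw [max_eq_right h]; simp [abs_nonneg]
        · rw [max_eq_left h]
      have h3 : |a ⬝ᵥ ξ - β| ≤ |a ⬝ᵥ ξ| + |β| := abs_sub _ _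
      linarith
    have hIntL : Integrable (fun ξ => a ⬝ᵥ ξ) P := by
      refine Integrable.mono' (integrable_const C) hL.aestronglyMeasurable ?_
      filter_upwards [haeW] with ξ hξ using hC ξ hξ
    set IL := ∫ ξ, a ⬝ᵥ ξ ∂P with hIL
    have hbdd : BddBelow (Set.range fun β : ℝ => β + ε⁻¹ * ∫ ξ, max (a ⬝ᵥ ξ - β) 0 ∂P) := by
      refine ⟨IL, ?_⟩
      rintro _ ⟨β, rfl⟩
      rcases le_or_gt IL β with h | h
      · have : 0 ≤ ∫ ξ, max (a ⬝ᵥ ξ - β) 0 ∂P :=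
          integral_nonneg fun ξ => le_max_right _ _
        nlinarith
      · have hmono : IL - β ≤ ∫ ξ, max (a ⬝ᵥ ξ - β) 0 ∂P := by
          have : ∫ ξ, (a ⬝ᵥ ξ - β) ∂P ≤ ∫ ξ, max (a ⬝ᵥ ξ - β) 0 ∂P :=
            integral_mono (hIntL.sub (integrable_const β)) (hInt β)
              fun ξ => le_max_left _ _
          rwa [integral_sub hIntL (integrable_const β), integral_const,
            probReal_univ, smul_eq_mul, one_mul] at this
        nlinarith
    have hle : cvar P ε (fun ξ => a ⬝ᵥ ξ) ≤ M + ε⁻¹ * ∫ ξ, max (a ⬝ᵥ ξ - M) 0 ∂P :=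
      ciInf_le hbdd M
    have hzero : ∫ ξ, max (a ⬝ᵥ ξ - M) 0 ∂P = 0 := by
      have h0 : (fun ξ => max (a ⬝ᵥ ξ - M) 0) =ᵐ[P] fun _ => (0 : ℝ) := by
        filter_upwards [haeW] with ξ hξ
        exact max_eq_right (by linarith [hmax' ξ hξ])
      rw [integral_congr_ae h0, integral_zero]
    rw [hzero, mul_zero, add_zero] at hle
    exact hle
  -- the dirac measure at ξ₀ achieves M
  have hdirac : M ∈ S := by
    refine ⟨Measure.dirac ξ₀, inferInstance, ?_, ?_⟩
    · rw [Measure.dirac_apply' _ hWmeas]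
      simp [hξ₀W]
    · have hint : ∀ β : ℝ, ∫ ξ, max (a ⬝ᵥ ξ - β) 0 ∂(Measure.dirac ξ₀)
          = max (M - β) 0 := fun β => integral_dirac _ _
      unfold cvar
      refine le_antisymm ?_ ?_
      · refine le_ciInf fun β => ?_
        dsimp only
        rw [hint β]
        rcases le_or_gt M β with h | h
        · have : 0 ≤ ε⁻¹ * max (M - β) 0 := by positivity
          linarith
        · rw [max_eq_left (by linarith)]
          nlinarith
      · have := ciInf_le (f := fun β : ℝ => β + ε⁻¹ * ∫ ξ, max (a ⬝ᵥ ξ - β) 0 ∂(Measure.dirac ξ₀))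
          ⟨M, by rintro _ ⟨β, rfl⟩; dsimp only; rw [hint β]
                 rcases le_or_gt M β with h | h
                 · have : 0 ≤ ε⁻¹ * max (M - β) 0 := by positivity
                   linarith
                 · rw [max_eq_left (by linarith)]; nlinarith⟩ M
        simpa [hint M] using this
  exact ⟨ξ₀, hξ₀W, hmax', le_antisymm (csSup_le ⟨M, hdirac⟩ hub) (le_csSup ⟨M, hub⟩ hdirac)⟩
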